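/- Let k ≥ 1, let a, b ∈ {1, 2, ..., 2k+1} both be odd, and let H_1, H_2, ..., H_{2k+1} be graphs each with n vertices. If the generalized lexicographic product P_{2k+1}[H_1, H_2, ..., H_{2k+1}] contains a Hamiltonian path starting in a vertex of the copy of H_a and ending in a vertex of the copy of H_b, then the sum over i = 0, ..., k of π(H_{2i+1}) is at least n − 1. -/

import Mathlib

open SimpleGraph Finset

/-- The generalized lexicographic product `G[H₁,…,Hₘ]` of a graph `G` on vertices
`u_1, …, u_m` (indexed by `Fin m`, so `u_i` corresponds to index `i-1`) and graphs
`H 0, …, H (m-1)`, each on `n` vertices: each vertex `i` of `G` is replaced by a copy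
of `H i`, and all edges are added between the copies of `H i` and `H j` whenever
`i` and `j` are adjacent in `G`. -/
def genLexProd {m n : ℕ} (G : SimpleGraph (Fin m)) (H : Fin m → SimpleGraph (Fin n)) :
    SimpleGraph (Fin m × Fin n) where
  Adj p q := G.Adj p.1 q.1 ∨ (p.1 = q.1 ∧ (H p.1).Adj p.2 q.2)
  symm := by
    constructor
    rintro p q (h | ⟨h1, h2⟩)
    · exact Or.inl h.symm
    · exact Or.inr ⟨h1.symm, by rw [← h1]; exact h2.symm⟩
  loopless := by
    constructor
    rintro p (h | ⟨-, h2⟩)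
    · exact G.loopless.irrefl _ h
    · exact (H p.1).loopless.irrefl _ h2

/-- The lexicographic product `G[H]`. -/
def lexProd {α β : Type*} (G : SimpleGraph α) (H : SimpleGraph β) :
    SimpleGraph (α × β) where
  Adj p q := G.Adj p.1 q.1 ∨ (p.1 = q.1 ∧ H.Adj p.2 q.2)
  symm := by
    constructor
    rintro p q (h | ⟨h1, h2⟩)
    · exact Or.inl h.symm
    · exact Or.inr ⟨h1.symm, h2.symm⟩
  loopless := by
    constructor
    rintro p (h | ⟨-, h2⟩)
    · exact G.loopless.irrefl _ h
    · exact H.loopless.irrefl _ h2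

/-- A linear forest: an acyclic graph in which every vertex has degree at most `2`,
i.e. a forest all of whose components are paths. -/
def SimpleGraph.IsLinearForest {V : Type*} (F : SimpleGraph V) : Prop :=
  F.IsAcyclic ∧ ∀ v : V, (F.neighborSet v).ncard ≤ 2

/-- `piLF H` is `π(H)`: the maximum number of edges of a spanning linear forest of `H`.
(A spanning subgraph of `H` is a graph on the same vertex set all of whose edges are
edges of `H`, i.e. a graph `F ≤ H`.) -/
noncomputable def piLF {V : Type*} (H : SimpleGraph V) : ℕ :=
  sSup {m : ℕ | ∃ F : SimpleGraph V, F ≤ H ∧ F.IsLinearForest ∧ F.edgeSet.ncard = m}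

/-- A graph is traceable if it contains a hamiltonian path. -/
def SimpleGraph.IsTraceable {V : Type*} [DecidableEq V] (G : SimpleGraph V) : Prop :=
  ∃ (u v : V) (p : G.Walk u v), p.IsHamiltonian

/-- A graph is hamiltonian connected if any two distinct vertices are joined by a
hamiltonian path. -/
def SimpleGraph.IsHamiltonianConnected {V : Type*} [DecidableEq V] (G : SimpleGraph V) : Prop :=
  ∀ u v : V, u ≠ v → ∃ p : G.Walk u v, p.IsHamiltonian



namespace SimpleGraph

variable {V : Type*} {G : SimpleGraph V}

lemma Walk.mem_support_of_mem_edges'' {u v w : V} (p : G.Walk u v) {e : Sym2 V}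
    (he : e ∈ p.edges) (hw : w ∈ e) : w ∈ p.support := by
  revert he hw
  refine Sym2.ind ?_ e
  intro a b he hw
  rcases Sym2.mem_iff.mp hw with rfl | rfl
  · exact p.fst_mem_support_of_mem_edges he
  · exact p.snd_mem_support_of_mem_edges he

lemma Walk.IsPath.countP_edges_start_le_one [DecidableEq V] {u v : V} {p : G.Walk u v}
    (hp : p.IsPath) : p.edges.countP (fun e => u ∈ e) ≤ 1 := by
  cases p with
  | nil => simp
  | cons h q =>
    rw [Walk.edges_cons, List.countP_cons]
    have hu : u ∉ q.support := ((Walk.cons_isPath_iff h q).mp hp).2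
    have h0 : q.edges.countP (fun e => u ∈ e) = 0 := by
      rw [List.countP_eq_zero]
      intro e he
      simpa using fun hw => hu (q.mem_support_of_mem_edges'' he hw)
    rw [h0]
    split <;> omega

lemma Walk.IsPath.countP_edges_le_two [DecidableEq V] {u v : V} (w : V) {p : G.Walk u v}
    (hp : p.IsPath) : p.edges.countP (fun e => w ∈ e) ≤ 2 := by
  induction p with
  | nil => simp
  | @cons u u' v h q ih =>
    rw [Walk.edges_cons, List.countP_cons]
    obtain ⟨hq, hu⟩ := (Walk.cons_isPath_iff h q).mp hp
    by_cases hw : w ∈ s(u, u')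
    · rcases Sym2.mem_iff.mp hw with rfl | rfl
      · have h0 : q.edges.countP (fun e => w ∈ e) = 0 := by
          rw [List.countP_eq_zero]
          intro e he
          simpa using fun hm => hu (q.mem_support_of_mem_edges'' he hm)
        rw [h0]
        split <;> omega
      · have h1 := hq.countP_edges_start_le_one
        split <;> omega
    · have h2 := ih hq
      simpa [hw] using h2

lemma Walk.IsPath.isAcyclic_fromEdgeSet [DecidableEq V] {u v : V} {p : G.Walk u v} (hp : p.IsPath) :
    (fromEdgeSet {e | e ∈ p.edges}).IsAcyclic := by
  induction p with
  | nil =>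
    intro w c hc
    cases c with
    | nil => exact hc.ne_nil rfl
    | cons h' d => simp [fromEdgeSet_adj] at h'
  | @cons u u' v h q ih =>
    obtain ⟨hq, hu⟩ := (Walk.cons_isPath_iff h q).mp hp
    intro w c hc
    have hP : ∀ t, (fromEdgeSet {e | e ∈ (Walk.cons h q).edges}).Adj u t → t = u' := by
      intro t ht
      rw [fromEdgeSet_adj] at ht
      obtain ⟨hmem, hne⟩ := ht
      have hmem' : s(u, t) ∈ s(u, u') :: q.edges := hmem
      rcases List.mem_cons.mp hmem' with heq | hmem''
      · exact Sym2.congr_right.mp heq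
      · exact absurd (q.fst_mem_support_of_mem_edges hmem'') hu
    by_cases he : s(u, u') ∈ c.edges
    · have hus : u ∈ c.support := c.fst_mem_support_of_mem_edges
        (by simpa using he)
      have hc' := hc.rotate hus
      have hnn : ¬ (c.rotate _ hus).Nil := hc'.not_nil
      obtain ⟨x, hadj, d, hd⟩ := Walk.not_nil_iff.mp hnn
      have hx : x = u' := hP x hadj
      have hdnn : ¬ d.reverse.Nil := Walk.not_nil_of_ne hadj.ne
      obtain ⟨z, hadj2, d2, hd2⟩ := Walk.not_nil_iff.mp hdnn
      have hz : z = u' := hP z hadj2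
      have hmemd : s(u, z) ∈ d.edges := by
        have : s(u, z) ∈ d.reverse.edges := by rw [hd2]; exact List.mem_cons_self
        rwa [Walk.edges_reverse, List.mem_reverse] at this
      have hnodup := hc'.edges_nodup
      rw [hd] at hnodup
      rw [Walk.edges_cons] at hnodup
      have hnotmem := (List.nodup_cons.mp hnodup).1
      have heq : s(u, x) = s(u, z) := by rw [hx, hz]
      rw [heq] at hnotmem
      exact hnotmem hmemd
    · have hsub : ∀ e ∈ c.edges, e ∈ (fromEdgeSet {e | e ∈ q.edges}).edgeSet := by
        intro e hce
        have h1 := c.edges_subset_edgeSet hce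
        rw [edgeSet_fromEdgeSet] at h1 ⊢
        refine ⟨?_, h1.2⟩
        have h2 : e ∈ s(u, u') :: q.edges := h1.1
        rcases List.mem_cons.mp h2 with heq | hm
        · exact absurd (heq ▸ hce) he
        · exact hm
      exact ih hq (c.transfer _ hsub) (hc.transfer hsub)

end SimpleGraph


theorem odd_path_hampath_odd_odd (k n : ℕ) (hk : 1 ≤ k) (a b : ℕ)
    (ha1 : 1 ≤ a) (ha2 : a ≤ 2 * k + 1) (hb1 : 1 ≤ b) (hb2 : b ≤ 2 * k + 1)
    (hao : Odd a) (hbo : Odd b)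
    (H : Fin (2 * k + 1) → SimpleGraph (Fin n))
    (x y : Fin (2 * k + 1) × Fin n)
    (p : (genLexProd (pathGraph (2 * k + 1)) H).Walk x y) (hp : p.IsHamiltonian)
    (hx : (x.1 : ℕ) = a - 1) (hy : (y.1 : ℕ) = b - 1) :
    n - 1 ≤ ∑ i : Fin (k + 1), piLF (H ⟨2 * i.1, by have := i.2; omega⟩) := by
  classical
  have hpath := hp.isPath
  have hnodup : p.edges.Nodup := hpath.edges_nodup
  have hcard : Fintype.card (Fin (2 * k + 1) × Fin n) = (2 * k + 1) * n := by simp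
  have hlen : p.length = (2 * k + 1) * n - 1 := by rw [hp.length_eq, hcard]
  set E : Finset (Sym2 (Fin (2 * k + 1) × Fin n)) := p.edges.toFinset with hEdef
  have hEcard : E.card = (2 * k + 1) * n - 1 := by
    rw [hEdef, List.toFinset_card_of_nodup hnodup, Walk.length_edges, hlen]
  -- each vertex lies in at most two edges of the path
  have hdeg : ∀ v : Fin (2 * k + 1) × Fin n, (E.filter (fun e => v ∈ e)).card ≤ 2 := by
    intro v
    have h1 : E.filter (fun e => v ∈ e) ⊆ (p.edges.filter (fun e => v ∈ e)).toFinset := by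
      intro e he'
      simp only [hEdef, Finset.mem_filter, List.mem_toFinset, List.mem_filter] at he' ⊢
      exact ⟨he'.1, by simpa using he'.2⟩
    calc (E.filter (fun e => v ∈ e)).card
        ≤ ((p.edges.filter (fun e => v ∈ e)).toFinset).card := Finset.card_le_card h1
      _ ≤ (p.edges.filter (fun e => v ∈ e)).length := List.toFinset_card_le _
      _ = p.edges.countP (fun e => v ∈ e) := (List.countP_eq_length_filter).symm
      _ ≤ 2 := hpath.countP_edges_le_two v
  -- bad vertices (odd indices)
  set B : Finset (Fin (2 * k + 1) × Fin n) :=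
    univ.filter (fun v => (v.1 : ℕ) % 2 = 1) with hBdef
  have hBcard : B.card ≤ k * n := by
    have h1 : B.card ≤ ((Finset.range k) ×ˢ (univ : Finset (Fin n))).card := by
      apply Finset.card_le_card_of_injOn (fun v => (((v.1 : ℕ) - 1) / 2, v.2))
      · intro v hv
        simp only [hBdef, Finset.mem_coe, Finset.mem_filter] at hv
        have hv2 := v.1.isLt
        simp only [Finset.mem_coe, Finset.mem_product, Finset.mem_range, Finset.mem_univ, and_true]
        omega
      · intro v hv w hw hvw
        simp only [hBdef, Finset.coe_filter, Set.mem_setOf_eq] at hv hw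
        have h1 := congrArg Prod.fst hvw
        have h2 := congrArg Prod.snd hvw
        simp only at h1 h2
        have hval : (v.1 : ℕ) = (w.1 : ℕ) := by
          have hv2 := v.1.isLt
          have hw2 := w.1.isLt
          omega
        exact Prod.ext (Fin.ext hval) h2
    simpa using h1
  set Ag : Sym2 (Fin (2 * k + 1) × Fin n) → Prop :=
    fun e => ∀ v ∈ e, ((v.1 : ℕ) % 2 = 0) with hAdef
  set Eg := E.filter Ag with hEgdef
  set Eb := E.filter (fun e => ¬ Ag e) with hEbdef
  have hsplit : Eg.card + Eb.card = E.card :=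
    Finset.card_filter_add_card_filter_not _
  have hEb : Eb.card ≤ 2 * (k * n) := by
    have hsub : Eb ⊆ B.biUnion (fun v => E.filter (fun e => v ∈ e)) := by
      intro e he
      simp only [hEbdef, Finset.mem_filter] at he
      obtain ⟨heE, hbad⟩ := he
      obtain ⟨v, hv, hv2⟩ : ∃ v ∈ e, ¬ ((v.1 : ℕ) % 2 = 0) := by
        by_contra hcon
        push_neg at hcon
        exact hbad (fun v hv => hcon v hv)
      refine Finset.mem_biUnion.mpr ⟨v, ?_, ?_⟩
      · simp only [hBdef, Finset.mem_filter, Finset.mem_univ, true_and]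
        omega
      · simp only [Finset.mem_filter]
        exact ⟨heE, hv⟩
    calc Eb.card ≤ (B.biUnion (fun v => E.filter (fun e => v ∈ e))).card :=
          Finset.card_le_card hsub
      _ ≤ ∑ v ∈ B, (E.filter (fun e => v ∈ e)).card := Finset.card_biUnion_le
      _ ≤ ∑ _v ∈ B, 2 := Finset.sum_le_sum (fun v _ => hdeg v)
      _ = 2 * B.card := by rw [Finset.sum_const, smul_eq_mul, mul_comm]
      _ ≤ 2 * (k * n) := by omega
  -- the per-index edge sets
  set J : Fin (k + 1) → Fin (2 * k + 1) := fun i => ⟨2 * i.1, by have := i.2; omega⟩ with hJdef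
  set Ei : Fin (k + 1) → Finset (Sym2 (Fin (2 * k + 1) × Fin n)) :=
    fun i => E.filter (fun e => ∀ v ∈ e, v.1 = J i) with hEidef
  have hkey : ∀ a' b' : Fin (2 * k + 1) × Fin n,
      s(a', b') ∈ (genLexProd (pathGraph (2 * k + 1)) H).edgeSet →
      (a'.1 : ℕ) % 2 = 0 → (b'.1 : ℕ) % 2 = 0 → a'.1 = b'.1 := by
    intro a' b' hab ha' hb'
    rw [mem_edgeSet] at hab
    have hab' : (pathGraph (2 * k + 1)).Adj a'.1 b'.1 ∨
        (a'.1 = b'.1 ∧ (H a'.1).Adj a'.2 b'.2) := hab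
    rcases hab' with h | ⟨h, -⟩
    · rw [pathGraph_adj] at h
      exfalso; omega
    · exact h
  have hEg_sub : Eg ⊆ univ.biUnion Ei := by
    intro e
    refine Sym2.ind ?_ e
    intro a' b' he
    simp only [hEgdef, Finset.mem_filter, hAdef] at he
    obtain ⟨heE, hA⟩ := he
    have ha' := hA a' (Sym2.mem_mk_left a' b')
    have hb' := hA b' (Sym2.mem_mk_right a' b')
    have heG : s(a', b') ∈ (genLexProd (pathGraph (2 * k + 1)) H).edgeSet :=
      p.edges_subset_edgeSet (List.mem_toFinset.mp heE)
    have hab : a'.1 = b'.1 := hkey a' b' heG ha' hb'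
    have hlt := a'.1.isLt
    refine Finset.mem_biUnion.mpr ⟨⟨(a'.1 : ℕ) / 2, by omega⟩, Finset.mem_univ _, ?_⟩
    simp only [hEidef, Finset.mem_filter]
    refine ⟨heE, ?_⟩
    intro v hv
    have hJv : ((J ⟨(a'.1 : ℕ) / 2, by omega⟩ : Fin (2 * k + 1)) : ℕ) = (a'.1 : ℕ) := by
      simp only [hJdef]
      omega
    have hv1 : (v.1 : ℕ) = (a'.1 : ℕ) := by
      rcases Sym2.mem_iff.mp hv with h | h
      · rw [h]
      · rw [h, ← hab]
    exact Fin.ext (by rw [hv1, hJv])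
  have hEg_card : Eg.card ≤ ∑ i : Fin (k + 1), (Ei i).card :=
    le_trans (Finset.card_le_card hEg_sub) Finset.card_biUnion_le
  -- the per-index bound via linear forests
  have hper : ∀ i : Fin (k + 1), (Ei i).card ≤ piLF (H (J i)) := by
    intro i
    set j := J i with hjdef
    set F : SimpleGraph (Fin n) :=
      { Adj := fun u w => u ≠ w ∧ s(((j, u) : Fin (2 * k + 1) × Fin n), (j, w)) ∈ p.edges
        symm := by
          constructor
          rintro u w ⟨h1, h2⟩
          exact ⟨h1.symm, by rwa [Sym2.eq_swap] at h2⟩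
        loopless := ⟨fun u h => h.1 rfl⟩ } with hFdef
    have hFadj : ∀ u w, F.Adj u w ↔
        (u ≠ w ∧ s(((j, u) : Fin (2 * k + 1) × Fin n), (j, w)) ∈ p.edges) :=
      fun _ _ => Iff.rfl
    have hFH : F ≤ H j := by
      intro u w huw
      obtain ⟨h1, h2⟩ := (hFadj u w).mp huw
      have h3 := p.edges_subset_edgeSet h2
      rw [mem_edgeSet] at h3
      have h4 : (pathGraph (2 * k + 1)).Adj j j ∨ (j = j ∧ (H j).Adj u w) := h3
      rcases h4 with h | ⟨-, h⟩
      · exact absurd h (pathGraph (2 * k + 1)).irrefl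
      · exact h
    have hlin : F.IsLinearForest := by
      constructor
      · intro w c hc
        have hmono : ∀ {a' b' : Fin n}, F.Adj a' b' →
            (fromEdgeSet {e | e ∈ p.edges}).Adj ((j, a') : Fin (2 * k + 1) × Fin n) (j, b') := by
          intro a' b' hab
          obtain ⟨h1, h2⟩ := (hFadj a' b').mp hab
          rw [fromEdgeSet_adj]
          exact ⟨h2, by simp [h1]⟩
        let f : F →g (fromEdgeSet {e | e ∈ p.edges}) :=
          ⟨fun u => ((j, u) : Fin (2 * k + 1) × Fin n), hmono⟩
        have hf : Function.Injective f := by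
          intro a' b' hab
          exact congrArg Prod.snd hab
        exact hpath.isAcyclic_fromEdgeSet (c.map f) (hc.map hf)
      · intro v
        have hinj : Function.Injective
            (fun w : Fin n => s(((j, v) : Fin (2 * k + 1) × Fin n), (j, w))) := by
          intro a' b' hab
          have h1 := Sym2.congr_right.mp hab
          simpa using congrArg Prod.snd h1
        have hsub : (fun w : Fin n => s(((j, v) : Fin (2 * k + 1) × Fin n), (j, w))) ''
            (F.neighborSet v) ⊆ ↑(E.filter (fun e => ((j, v) : Fin (2 * k + 1) × Fin n) ∈ e)) := by
          rintro e ⟨w, hw, rfl⟩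
          have hw' := (hFadj v w).mp hw
          simp only [Finset.coe_filter, Set.mem_setOf_eq]
          exact ⟨List.mem_toFinset.mpr hw'.2, Sym2.mem_mk_left _ _⟩
        calc (F.neighborSet v).ncard
            = ((fun w : Fin n => s(((j, v) : Fin (2 * k + 1) × Fin n), (j, w))) ''
                (F.neighborSet v)).ncard := (Set.ncard_image_of_injective _ hinj).symm
          _ ≤ (↑(E.filter (fun e => ((j, v) : Fin (2 * k + 1) × Fin n) ∈ e)) :
                Set (Sym2 (Fin (2 * k + 1) × Fin n))).ncard :=
              Set.ncard_le_ncard hsub (Finset.finite_toSet _)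
          _ = (E.filter (fun e => ((j, v) : Fin (2 * k + 1) × Fin n) ∈ e)).card :=
              Set.ncard_coe_finset _
          _ ≤ 2 := hdeg _
    have himg : Sym2.map (fun u : Fin n => ((j, u) : Fin (2 * k + 1) × Fin n)) '' F.edgeSet
        = ↑(Ei i) := by
      ext e
      constructor
      · intro he
        obtain ⟨e', he', rfl⟩ := he
        revert he'
        refine Sym2.ind ?_ e'
        intro u w he'
        rw [mem_edgeSet] at he'
        obtain ⟨h1, h2⟩ := (hFadj u w).mp he'
        rw [Sym2.map_pair_eq]
        simp only [hEidef, Finset.coe_filter, Set.mem_setOf_eq]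
        refine ⟨List.mem_toFinset.mpr h2, ?_⟩
        intro v hv
        rcases Sym2.mem_iff.mp hv with rfl | rfl <;> rfl
      · intro he
        revert he
        refine Sym2.ind ?_ e
        intro a' b' he
        simp only [hEidef, Finset.coe_filter, Set.mem_setOf_eq] at he
        obtain ⟨heE, hall⟩ := he
        have ha' := hall a' (Sym2.mem_mk_left a' b')
        have hb' := hall b' (Sym2.mem_mk_right a' b')
        have hmem : s(a', b') ∈ p.edges := List.mem_toFinset.mp heE
        have hne : a' ≠ b' := by
          intro hcontra
          have := (genLexProd (pathGraph (2 * k + 1)) H).not_isDiag_of_mem_edgeSet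
            (p.edges_subset_edgeSet hmem)
          exact this (by rw [hcontra]; exact Sym2.mk_isDiag_iff.mpr rfl)
        have hne2 : a'.2 ≠ b'.2 := by
          intro hcontra
          exact hne (Prod.ext (ha'.trans hb'.symm) hcontra)
        refine ⟨s(a'.2, b'.2), ?_, ?_⟩
        · rw [mem_edgeSet, hFadj a'.2 b'.2]
          refine ⟨hne2, ?_⟩
          have hea : ((j, a'.2) : Fin (2 * k + 1) × Fin n) = a' := by
            rw [hjdef, ← ha']
          have heb : ((j, b'.2) : Fin (2 * k + 1) × Fin n) = b' := by
            rw [hjdef, ← hb']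
          rw [hea, heb]
          exact hmem
        · rw [Sym2.map_pair_eq]
          have hea : ((j, a'.2) : Fin (2 * k + 1) × Fin n) = a' := by rw [hjdef, ← ha']
          have heb : ((j, b'.2) : Fin (2 * k + 1) × Fin n) = b' := by rw [hjdef, ← hb']
          rw [hea, heb]
    have hcardEi : (Ei i).card = F.edgeSet.ncard := by
      rw [← Set.ncard_coe_finset, ← himg,
        Set.ncard_image_of_injective _ (Sym2.map.injective (fun a' b' hab => by
          simpa using congrArg Prod.snd hab))]
    have hbdd : BddAbove {m : ℕ | ∃ F' : SimpleGraph (Fin n), F' ≤ H j ∧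
        F'.IsLinearForest ∧ F'.edgeSet.ncard = m} := by
      refine ⟨Nat.card (Sym2 (Fin n)), ?_⟩
      rintro m ⟨F', -, -, rfl⟩
      have h1 := Set.ncard_le_ncard (Set.subset_univ F'.edgeSet) Set.finite_univ
      simpa [Set.ncard_univ] using h1
    have hmem : F.edgeSet.ncard ∈ {m : ℕ | ∃ F' : SimpleGraph (Fin n), F' ≤ H j ∧
        F'.IsLinearForest ∧ F'.edgeSet.ncard = m} := ⟨F, hFH, hlin, rfl⟩
    rw [hcardEi]
    exact le_csSup hbdd hmem
  have hsum : ∑ i : Fin (k + 1), (Ei i).card ≤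
      ∑ i : Fin (k + 1), piLF (H (J i)) :=
    Finset.sum_le_sum (fun i _ => hper i)
  have hgoal : ∑ i : Fin (k + 1), piLF (H (J i)) =
      ∑ i : Fin (k + 1), piLF (H ⟨2 * i.1, by have := i.2; omega⟩) := rfl
  rw [← hgoal]
  have hmul : (2 * k + 1) * n = 2 * (k * n) + n := by ring
  set S1 := Eg.card
  set S2 := Eb.card
  set S3 := ∑ i : Fin (k + 1), (Ei i).card
  set S4 := ∑ i : Fin (k + 1), piLF (H (J i))
  omega
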